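/- (Gradient Bound, GB) Fix γ ∈ (0,1], λ > 0, a finite index set T, and symmetric matrices H_t ∈ ℝ^{d×d} (t ∈ T). Let M ⪰ O be any feasible solution and let M* be optimal for λ, i.e., M* ⪰ O and P_λ(M*) ≤ P_λ(M') for all M' ⪰ O. Then ‖M* − (M − (1/(2λ))∇P_λ(M))‖_F ≤ (1/(2λ))‖∇P_λ(M)‖_F. -/

import Mathlib

open scoped BigOperators
open scoped Matrix

/-- Frobenius inner product ⟨A,B⟩ = tr(Aᵀ B). -/
noncomputable def frob {d : ℕ} (A B : Matrix (Fin d) (Fin d) ℝ) : ℝ :=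
  Matrix.trace (Aᵀ * B)

/-- Frobenius norm ‖A‖_F = √⟨A,A⟩. -/
noncomputable def frobNorm {d : ℕ} (A : Matrix (Fin d) (Fin d) ℝ) : ℝ :=
  Real.sqrt (frob A A)

/-- Smoothed hinge loss ℓ_γ. -/
noncomputable def shinge (γ x : ℝ) : ℝ :=
  if 1 < x then 0 else if 1 - γ ≤ x then (1 - x) ^ 2 / (2 * γ) else 1 - x - γ / 2

/-- Derivative of the smoothed hinge loss ℓ_γ'. -/
noncomputable def shinge' (γ x : ℝ) : ℝ :=
  if 1 < x then 0 else if 1 - γ ≤ x then -(1 - x) / γ else -1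

/-- Primal objective P_λ(M) = Σ_t ℓ_γ(⟨M,H_t⟩) + (λ/2)‖M‖_F². -/
noncomputable def Pobj {d : ℕ} {ι : Type*} (γ lam : ℝ) (T : Finset ι)
    (H : ι → Matrix (Fin d) (Fin d) ℝ) (M : Matrix (Fin d) (Fin d) ℝ) : ℝ :=
  (∑ t ∈ T, shinge γ (frob M (H t))) + lam / 2 * frobNorm M ^ 2

/-- Gradient ∇P_λ(M) = Σ_t ℓ_γ'(⟨M,H_t⟩) H_t + λ M. -/
noncomputable def gradP {d : ℕ} {ι : Type*} (γ lam : ℝ) (T : Finset ι)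
    (H : ι → Matrix (Fin d) (Fin d) ℝ) (M : Matrix (Fin d) (Fin d) ℝ) :
    Matrix (Fin d) (Fin d) ℝ :=
  (∑ t ∈ T, shinge' γ (frob M (H t)) • H t) + lam • M

lemma shinge_grad_ineq {γ : ℝ} (hγ : 0 < γ) (a b : ℝ) :
    shinge γ a + shinge' γ a * (b - a) ≤ shinge γ b := by
  have hγ' : γ ≠ 0 := ne_of_gt hγ
  unfold shinge shinge'
  split_ifs with h1 h2 h3 h4 h5 h6
  · norm_num
  · simp only [zero_add, zero_mul, add_zero]
    positivity
  · push_neg at h3; nlinarith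
  · have e : (1 - a) ^ 2 / (2 * γ) + -(1 - a) / γ * (b - a)
        = ((1 - a) ^ 2 - 2 * (1 - a) * (b - a)) / (2 * γ) := by field_simp; ring
    rw [e]
    apply div_nonpos_of_nonpos_of_nonneg _ (by positivity)
    push_neg at h1
    nlinarith
  · have e : (1 - a) ^ 2 / (2 * γ) + -(1 - a) / γ * (b - a)
        = ((1 - a) ^ 2 - 2 * (1 - a) * (b - a)) / (2 * γ) := by field_simp; ring
    rw [e, div_le_div_iff_of_pos_right (by positivity)]
    nlinarith [sq_nonneg (a - b)]
  · have e : (1 - a) ^ 2 / (2 * γ) + -(1 - a) / γ * (b - a)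
        = ((1 - a) ^ 2 - 2 * (1 - a) * (b - a)) / (2 * γ) := by field_simp; ring
    rw [e, div_le_iff₀ (by positivity)]
    push_neg at h1 h6
    nlinarith [mul_nonneg (by linarith : (0:ℝ) ≤ γ - (1 - a))
      (by nlinarith : (0:ℝ) ≤ 2 * (1 - b) - γ - (1 - a))]
  · linarith
  · rw [le_div_iff₀ (by positivity)]
    nlinarith [sq_nonneg (γ - (1 - b))]
  · linarith

lemma shinge_convex {γ : ℝ} (hγ : 0 < γ) {s : ℝ} (hs : 0 ≤ s) (hs1 : s ≤ 1) (a b : ℝ) :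
    shinge γ (s * a + (1 - s) * b) ≤ s * shinge γ a + (1 - s) * shinge γ b := by
  have hA := shinge_grad_ineq hγ (s * a + (1 - s) * b) a
  have hB := shinge_grad_ineq hγ (s * a + (1 - s) * b) b
  nlinarith [mul_le_mul_of_nonneg_left hA hs,
    mul_le_mul_of_nonneg_left hB (by linarith : (0:ℝ) ≤ 1 - s)]

lemma frob_eq_sum {d : ℕ} (A B : Matrix (Fin d) (Fin d) ℝ) :
    frob A B = ∑ i, ∑ j, A j i * B j i := by
  simp [frob, Matrix.trace, Matrix.mul_apply, Matrix.diag, Matrix.transpose_apply]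

lemma frob_comm {d : ℕ} (A B : Matrix (Fin d) (Fin d) ℝ) : frob A B = frob B A := by
  simp [frob_eq_sum, mul_comm]

lemma frob_add_left {d : ℕ} (A B C : Matrix (Fin d) (Fin d) ℝ) :
    frob (A + B) C = frob A C + frob B C := by
  simp [frob, Matrix.transpose_add, Matrix.add_mul]

lemma frob_sub_left {d : ℕ} (A B C : Matrix (Fin d) (Fin d) ℝ) :
    frob (A - B) C = frob A C - frob B C := by
  simp [frob, Matrix.transpose_sub, Matrix.sub_mul]

lemma frob_smul_left {d : ℕ} (c : ℝ) (A B : Matrix (Fin d) (Fin d) ℝ) :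
    frob (c • A) B = c * frob A B := by
  simp [frob, Matrix.transpose_smul, Matrix.smul_mul]

lemma frob_sum_left {d : ℕ} {ι : Type*} (S : Finset ι) (f : ι → Matrix (Fin d) (Fin d) ℝ)
    (B : Matrix (Fin d) (Fin d) ℝ) :
    frob (∑ t ∈ S, f t) B = ∑ t ∈ S, frob (f t) B := by
  simp [frob, Matrix.transpose_sum, Matrix.sum_mul]

lemma frob_add_right {d : ℕ} (A B C : Matrix (Fin d) (Fin d) ℝ) :
    frob A (B + C) = frob A B + frob A C := by
  rw [frob_comm, frob_add_left, frob_comm B, frob_comm C]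

lemma frob_sub_right {d : ℕ} (A B C : Matrix (Fin d) (Fin d) ℝ) :
    frob A (B - C) = frob A B - frob A C := by
  rw [frob_comm, frob_sub_left, frob_comm B, frob_comm C]

lemma frob_smul_right {d : ℕ} (c : ℝ) (A B : Matrix (Fin d) (Fin d) ℝ) :
    frob A (c • B) = c * frob A B := by
  rw [frob_comm, frob_smul_left, frob_comm]

lemma frob_self_nonneg {d : ℕ} (A : Matrix (Fin d) (Fin d) ℝ) : 0 ≤ frob A A := by
  rw [frob_eq_sum]
  exact Finset.sum_nonneg fun i _ => Finset.sum_nonneg fun j _ => mul_self_nonneg _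

lemma frobNorm_sq {d : ℕ} (A : Matrix (Fin d) (Fin d) ℝ) : frobNorm A ^ 2 = frob A A :=
  Real.sq_sqrt (frob_self_nonneg A)

lemma psd_smul {d : ℕ} {c : ℝ} (hc : 0 ≤ c) {A : Matrix (Fin d) (Fin d) ℝ}
    (hA : A.PosSemidef) : (c • A).PosSemidef := by
  constructor
  · unfold Matrix.IsHermitian
    rw [Matrix.conjTranspose_smul, hA.1.eq]
    simp
  · intro x
    have h := hA.2 x
    have e : (x.sum fun i xi => x.sum fun j xj => star xi * (c • A) i j * xj)
        = c * (x.sum fun i xi => x.sum fun j xj => star xi * A i j * xj) := by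
      simp only [Finsupp.sum, Finset.mul_sum, Matrix.smul_apply, smul_eq_mul]
      exact Finset.sum_congr rfl fun i _ => Finset.sum_congr rfl fun j _ => by ring
    rw [e]
    exact mul_nonneg hc h

lemma grad_lower {d : ℕ} {ι : Type*} {γ : ℝ} (lam : ℝ) (hγ : 0 < γ)
    (T : Finset ι) (H : ι → Matrix (Fin d) (Fin d) ℝ)
    (M M' : Matrix (Fin d) (Fin d) ℝ) :
    Pobj γ lam T H M + frob (gradP γ lam T H M) (M' - M)
      + lam / 2 * frob (M' - M) (M' - M) ≤ Pobj γ lam T H M' := by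
  have hG : frob (gradP γ lam T H M) (M' - M)
      = (∑ t ∈ T, shinge' γ (frob M (H t)) * (frob M' (H t) - frob M (H t)))
        + lam * frob M (M' - M) := by
    rw [gradP, frob_add_left, frob_sum_left, frob_smul_left]
    congr 1
    refine Finset.sum_congr rfl fun t _ => ?_
    rw [frob_smul_left, frob_sub_right, frob_comm (H t) M', frob_comm (H t) M]
  have hq : lam / 2 * frobNorm M ^ 2 + lam * frob M (M' - M)
      + lam / 2 * frob (M' - M) (M' - M) = lam / 2 * frobNorm M' ^ 2 := by
    rw [frobNorm_sq, frobNorm_sq]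
    simp only [frob_sub_left, frob_sub_right]
    rw [frob_comm M' M]
    ring
  have h1 : ∑ t ∈ T, (shinge γ (frob M (H t))
        + shinge' γ (frob M (H t)) * (frob M' (H t) - frob M (H t)))
      ≤ ∑ t ∈ T, shinge γ (frob M' (H t)) :=
    Finset.sum_le_sum fun t _ => shinge_grad_ineq hγ _ _
  rw [Finset.sum_add_distrib] at h1
  rw [Pobj, Pobj, hG]
  linarith

lemma P_convex_combo {d : ℕ} {ι : Type*} {γ : ℝ} (lam : ℝ) (hγ : 0 < γ)
    {s : ℝ} (hs : 0 ≤ s) (hs1 : s ≤ 1)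
    (T : Finset ι) (H : ι → Matrix (Fin d) (Fin d) ℝ)
    (M M' : Matrix (Fin d) (Fin d) ℝ) :
    Pobj γ lam T H (s • M + (1 - s) • M')
      ≤ s * Pobj γ lam T H M + (1 - s) * Pobj γ lam T H M'
        - lam / 2 * (s * (1 - s)) * frob (M - M') (M - M') := by
  have hf : ∀ B : Matrix (Fin d) (Fin d) ℝ, frob (s • M + (1 - s) • M') B
      = s * frob M B + (1 - s) * frob M' B := fun B => by
    rw [frob_add_left, frob_smul_left, frob_smul_left]
  have h1 : ∑ t ∈ T, shinge γ (frob (s • M + (1 - s) • M') (H t))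
      ≤ ∑ t ∈ T, (s * shinge γ (frob M (H t)) + (1 - s) * shinge γ (frob M' (H t))) := by
    refine Finset.sum_le_sum fun t _ => ?_
    rw [hf]
    exact shinge_convex hγ hs hs1 _ _
  rw [Finset.sum_add_distrib, ← Finset.mul_sum, ← Finset.mul_sum] at h1
  have hq : lam / 2 * frobNorm (s • M + (1 - s) • M') ^ 2
      = s * (lam / 2 * frobNorm M ^ 2) + (1 - s) * (lam / 2 * frobNorm M' ^ 2)
        - lam / 2 * (s * (1 - s)) * frob (M - M') (M - M') := by
    rw [frobNorm_sq, frobNorm_sq, frobNorm_sq, hf]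
    simp only [frob_add_right, frob_smul_right, frob_sub_left, frob_sub_right]
    rw [frob_comm M' M]
    ring
  rw [Pobj, Pobj, Pobj, hq]
  linarith

/-- Gradient Bound (GB). -/
theorem gradient_bound {d : ℕ} {ι : Type*} (γ lam : ℝ)
    (hγ : 0 < γ) (hγ1 : γ ≤ 1) (hlam : 0 < lam)
    (T : Finset ι) (H : ι → Matrix (Fin d) (Fin d) ℝ)
    (hH : ∀ t ∈ T, (H t).IsSymm)
    (M Mstar : Matrix (Fin d) (Fin d) ℝ)
    (hM : M.PosSemidef) (hMstar : Mstar.PosSemidef)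
    (hopt : ∀ M' : Matrix (Fin d) (Fin d) ℝ, M'.PosSemidef →
      Pobj γ lam T H Mstar ≤ Pobj γ lam T H M') :
    frobNorm (Mstar - (M - (1 / (2 * lam)) • gradP γ lam T H M)) ≤
      (1 / (2 * lam)) * frobNorm (gradP γ lam T H M) := by
  set G := gradP γ lam T H M with hGdef
  set c : ℝ := 1 / (2 * lam) with hcdef
  have hc0 : 0 ≤ c := by positivity
  set D2 : ℝ := frob (M - Mstar) (M - Mstar) with hD2
  have hD2nn : 0 ≤ D2 := frob_self_nonneg _
  set K : ℝ := lam / 2 * D2 with hK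
  have hKnn : 0 ≤ K := by positivity
  -- optimality gap: Pobj Mstar ≤ Pobj M - K
  have hgap : Pobj γ lam T H Mstar ≤ Pobj γ lam T H M - K := by
    apply le_of_forall_pos_le_add
    intro ε hε
    set s : ℝ := min 1 (ε / (K + 1)) with hs
    have hs0 : 0 < s := lt_min one_pos (div_pos hε (by positivity))
    have hs1 : s ≤ 1 := min_le_left _ _
    have hN : (s • M + (1 - s) • Mstar).PosSemidef :=
      (psd_smul (le_of_lt hs0) hM).add (psd_smul (by linarith) hMstar)
    have h1 := hopt _ hN
    have h2 := P_convex_combo (γ := γ) lam hγ (le_of_lt hs0) hs1 T H M Mstar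
    -- s * Pstar ≤ s * PM - lam/2 * s * (1-s) * D2
    have h3 : Pobj γ lam T H Mstar ≤ Pobj γ lam T H M - (1 - s) * K := by
      have h4 : s * Pobj γ lam T H Mstar ≤ s * (Pobj γ lam T H M - (1 - s) * K) := by
        rw [hK]; nlinarith [h1.trans h2]
      exact le_of_mul_le_mul_left h4 hs0
    have h5 : s * K ≤ ε := by
      have h6 : s ≤ ε / (K + 1) := min_le_right _ _
      have h7 : s * K ≤ (ε / (K + 1)) * K := mul_le_mul_of_nonneg_right h6 hKnn
      have h8 : (ε / (K + 1)) * K ≤ ε := by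
        rw [div_mul_eq_mul_div, div_le_iff₀ (by positivity)]
        nlinarith
      linarith
    linarith
  -- gradient lower bound at M evaluated at Mstar
  have hlow := grad_lower (γ := γ) lam hγ T H M Mstar
  have hDeq : frob (Mstar - M) (Mstar - M) = D2 := by
    rw [hD2]
    simp only [frob_sub_left, frob_sub_right]
    ring
  -- key: frob G (Mstar - M) ≤ - lam * D2
  have hkey : frob G (Mstar - M) ≤ -lam * D2 := by
    rw [hDeq] at hlow
    rw [hK] at hgap
    linarith
  -- assemble
  have hE : Mstar - (M - c • G) = (Mstar - M) + c • G := by abel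
  have hEE : frob ((Mstar - M) + c • G) ((Mstar - M) + c • G)
      = frob (Mstar - M) (Mstar - M) + 2 * c * frob G (Mstar - M) + c ^ 2 * frob G G := by
    simp only [frob_add_left, frob_add_right, frob_smul_left, frob_smul_right]
    rw [frob_comm (Mstar - M) G]
    ring
  have h2cl : 2 * c * lam = 1 := by
    rw [hcdef]; field_simp
  have hle : frob ((Mstar - M) + c • G) ((Mstar - M) + c • G) ≤ c ^ 2 * frob G G := by
    rw [hEE, hDeq]
    nlinarith [mul_le_mul_of_nonneg_left hkey (by positivity : (0:ℝ) ≤ 2 * c)]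
  calc frobNorm (Mstar - (M - c • G)) = Real.sqrt (frob ((Mstar - M) + c • G) ((Mstar - M) + c • G)) := by
        rw [frobNorm, hE]
    _ ≤ Real.sqrt (c ^ 2 * frob G G) := Real.sqrt_le_sqrt hle
    _ = c * frobNorm G := by
        rw [frobNorm, Real.sqrt_mul (sq_nonneg c), Real.sqrt_sq hc0]
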